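/- Let F be a field of characteristic zero, let n ≥ 1, let x_1, …, x_{n+1} be pairwise distinct elements of F, let a_1, …, a_n ∈ F, and set f(s) = 1 + a_1 s + a_2 s² + ⋯ + a_n sⁿ. Define the polynomial Q(t) = Σ_{i=1}^{n+1} (Π_{j≠i} f(t(x_i − x_j))) / (Π_{j≠i} (x_i − x_j)) in F[t]. Then for every l with 0 ≤ l ≤ n−1, the coefficient of t^l in Q(t) is zero. (This is the localization constraint for the torus action on ℂPⁿ, whose weights at the i-th fixed point are x_i − x_j, j ≠ i.) -/

import Mathlib

open Polynomial
open Finset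


-- Lagrange identity: top-coefficient extraction
lemma lag_coeff_top {F : Type*} [Field F] (n : ℕ) (x : Fin (n+1) → F)
    (hx : Function.Injective x) (P : F[X]) (hP : P.degree < (n+1 : ℕ)) :
    ∑ i : Fin (n+1), (∏ j ∈ univ.erase i, (x i - x j))⁻¹ * P.eval (x i) = P.coeff n := by
  have hinj : Set.InjOn x (univ : Finset (Fin (n+1))) := hx.injOn
  have hcard : (#(univ : Finset (Fin (n+1))) : WithBot ℕ) = ((n+1 : ℕ) : WithBot ℕ) := by simp
  have h := Lagrange.eq_interpolate (s := univ) (v := x) hinj (by rw [hcard]; exact hP)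
  have hco := congrArg (fun q => q.coeff n) h
  simp only [Lagrange.interpolate_apply, finset_sum_coeff, coeff_C_mul] at hco
  rw [hco]
  refine Finset.sum_congr rfl fun i _ => ?_
  have hdeg : (Lagrange.basis univ x i).natDegree = n := by
    rw [Lagrange.natDegree_basis hinj (mem_univ i)]; simp
  have hlead : (Lagrange.basis univ x i).coeff n =
      ∏ j ∈ univ.erase i, (x i - x j)⁻¹ := by
    have : (Lagrange.basis univ x i).coeff n = (Lagrange.basis univ x i).leadingCoeff := by
      rw [leadingCoeff, hdeg]
    rw [this, Lagrange.basis, leadingCoeff_prod]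
    refine Finset.prod_congr rfl fun j hj => ?_
    have hne : x i ≠ x j := fun hh => (mem_erase.mp hj).1 (hx hh).symm
    rw [Lagrange.basisDivisor]
    rw [leadingCoeff_mul, leadingCoeff_C, leadingCoeff_X_sub_C, mul_one]
  rw [hlead, ← Finset.prod_inv_distrib, mul_comm]

-- weighted degree condition is multiplicative
lemma wdeg_mul {R : Type*} [CommSemiring R] {p q : (R[X])[X]}
    (hp : ∀ m, (p.coeff m).natDegree ≤ m) (hq : ∀ m, (q.coeff m).natDegree ≤ m) :
    ∀ m, ((p * q).coeff m).natDegree ≤ m := by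
  intro m
  rw [coeff_mul]
  refine natDegree_sum_le_of_forall_le _ _ fun y hy => ?_
  have hym := Finset.HasAntidiagonal.mem_antidiagonal.mp hy
  calc (p.coeff y.1 * q.coeff y.2).natDegree
      ≤ (p.coeff y.1).natDegree + (q.coeff y.2).natDegree := natDegree_mul_le
    _ ≤ y.1 + y.2 := add_le_add (hp _) (hq _)
    _ = m := hym

lemma wdeg_prod {R ι : Type*} [CommSemiring R] (s : Finset ι) (q : ι → (R[X])[X])
    (h : ∀ i ∈ s, ∀ m, ((q i).coeff m).natDegree ≤ m) :
    ∀ m, ((∏ i ∈ s, q i).coeff m).natDegree ≤ m := by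
  refine Finset.prod_induction q (fun p => ∀ m, (p.coeff m).natDegree ≤ m)
    (fun _ _ => wdeg_mul) ?_ h
  intro m
  rw [coeff_one]
  split <;> simp



/-- Localization constraint for the torus action on `ℂPⁿ`: with
`f(s) = 1 + a₁ s + ⋯ + aₙ sⁿ` and pairwise distinct `x₁, …, x_{n+1}`, the polynomial
`Q(t) = Σᵢ Πⱼ≠ᵢ f(t(xᵢ−xⱼ)) / Πⱼ≠ᵢ (xᵢ−xⱼ)` has vanishing coefficients in degrees
`0 ≤ l ≤ n − 1`. -/
theorem cp_n_localization_low_coeffs_vanish {F : Type*} [Field F] [CharZero F]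
    (n : ℕ) (hn : 1 ≤ n) (x : Fin (n + 1) → F) (hx : Function.Injective x)
    (a : Fin n → F) (f : F → F[X])
    (hf : ∀ c : F, f c = 1 + ∑ k : Fin n, C (a k * c ^ (k.1 + 1)) * X ^ (k.1 + 1))
    (l : ℕ) (hl : l ≤ n - 1) :
    (∑ i : Fin (n + 1),
        C ((∏ j ∈ Finset.univ.erase i, (x i - x j))⁻¹) *
          ∏ j ∈ Finset.univ.erase i, f (x i - x j)).coeff l = 0 := by
  classical
  have hln : l < n := by omega
  set φ : Fin (n+1) → (F[X] →+* F) := fun i => evalRingHom (x i) with hφ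
  set g : F[X] → (F[X])[X] :=
    fun c => 1 + ∑ k : Fin n, C (C (a k) * c ^ (k.1+1)) * X ^ (k.1+1) with hg
  set B : (F[X])[X] := ∏ j : Fin (n+1), g (X - C (x j)) with hB
  set P : F[X] := B.coeff l with hP
  -- degree bound
  have hdegP : P.natDegree ≤ l := by
    refine wdeg_prod _ _ (fun j _ m => ?_) l
    simp only [hg, coeff_add, finset_sum_coeff, coeff_C_mul, coeff_X_pow, coeff_one]
    refine le_trans (natDegree_add_le _ _) ?_
    refine max_le (by split <;> simp) ?_
    refine natDegree_sum_le_of_forall_le _ _ fun k _ => ?_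
    split
    · rename_i h
      calc (C (a k) * (X - C (x j)) ^ (k.1+1) * 1).natDegree
          ≤ (C (a k)).natDegree + ((X - C (x j)) ^ (k.1+1)).natDegree + (1 : F[X]).natDegree :=
            le_trans natDegree_mul_le (add_le_add natDegree_mul_le le_rfl)
        _ ≤ 0 + (k.1+1) * 1 + 0 := by
            refine add_le_add (add_le_add (by simp) ?_) (by simp)
            exact le_trans natDegree_pow_le (by simp [natDegree_X_sub_C])
        _ ≤ m := by omega
    · simp
  -- evaluation
  have hf0 : f 0 = 1 := by rw [hf]; simp
  have hmap : ∀ i j, (g (X - C (x j))).map (φ i) = f (x i - x j) := by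
    intro i j
    rw [hf]
    simp only [hg, Polynomial.map_add, Polynomial.map_one, Polynomial.map_sum,
      Polynomial.map_mul, map_C, Polynomial.map_pow, map_X, hφ]
    congr 1
    refine Finset.sum_congr rfl fun k _ => ?_
    congr 1
    simp [map_mul, map_pow]
  have heval : ∀ i, P.eval (x i) = (∏ j ∈ Finset.univ.erase i, f (x i - x j)).coeff l := by
    intro i
    have h1 : P.eval (x i) = (B.map (φ i)).coeff l := by
      rw [coeff_map]; rfl
    rw [h1, hB, Polynomial.map_prod]
    rw [Finset.prod_congr rfl fun j _ => hmap i j]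
    rw [← Finset.mul_prod_erase _ _ (Finset.mem_univ i), sub_self, hf0, one_mul]
  -- conclude
  rw [finset_sum_coeff]
  simp_rw [coeff_C_mul]
  rw [Finset.sum_congr rfl fun i _ => by rw [← heval i]]
  have hdeg' : P.degree < ((n + 1 : ℕ) : WithBot ℕ) :=
    lt_of_le_of_lt degree_le_natDegree (by exact_mod_cast Nat.lt_succ_of_lt (lt_of_le_of_lt hdegP hln))
  rw [lag_coeff_top n x hx P hdeg']
  exact coeff_eq_zero_of_natDegree_lt (lt_of_le_of_lt hdegP hln)
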